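/- For r ≥ 3, the roots of q_r in ℂ are exactly the φ(r)/2 distinct numbers 2·cos(2πk/r) for k coprime to r with 1 ≤ k < r/2, where q_r is defined by g_r(X) = X^{φ(r)/2} q_r(X + 1/X). -/

import Mathlib

open Polynomial Real

lemma aux_exp_add_inv (x : ℝ) :
    Complex.exp (x * Complex.I) + (Complex.exp (x * Complex.I))⁻¹
      = ((2 * Real.cos x : ℝ) : ℂ) := by
  rw [← Complex.exp_neg]
  push_cast
  rw [Complex.two_cos, neg_mul]

lemma aux_cop {k r : ℕ} (hkr : k ≤ r) (h : Nat.Coprime k r) : Nat.Coprime (r - k) r := by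
  have h1 : IsCoprime (k : ℤ) (r : ℤ) := Nat.isCoprime_iff_coprime.mpr h
  have h2 : IsCoprime (-(k : ℤ) + (r : ℤ) * 1) (r : ℤ) := h1.neg_left.add_mul_left_left 1
  have h3 : (-(k : ℤ) + (r : ℤ) * 1) = ((r - k : ℕ) : ℤ) := by push_cast [hkr]; ring
  rw [h3] at h2
  exact Nat.isCoprime_iff_coprime.mp h2

lemma aux_two_ne {k r : ℕ} (hr : 3 ≤ r) (h : Nat.Coprime k r) : 2 * k ≠ r := by
  intro he
  have hdvd : k ∣ r := ⟨2, by omega⟩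
  have : k ∣ Nat.gcd k r := Nat.dvd_gcd dvd_rfl hdvd
  rw [h] at this
  have := Nat.dvd_one.mp this
  omega

lemma aux_count (r : ℕ) (hr : 3 ≤ r) :
    ((Finset.range r).filter (fun k => Nat.Coprime k r ∧ 2 * k < r)).card
      = r.totient / 2 := by
  classical
  set A := (Finset.range r).filter (fun k => Nat.Coprime k r ∧ 2 * k < r) with hA
  set B := (Finset.range r).filter (fun k => Nat.Coprime k r ∧ r < 2 * k) with hB
  have hunion : (Finset.range r).filter (fun k => r.Coprime k) = A ∪ B := by
    ext k
    simp only [Finset.mem_union, hA, hB, Finset.mem_filter, Finset.mem_range]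
    constructor
    · rintro ⟨h1, h2⟩
      have h2' : Nat.Coprime k r := h2.symm
      have := aux_two_ne hr h2'
      omega
    · rintro (⟨h1, h2, h3⟩ | ⟨h1, h2, h3⟩) <;> exact ⟨h1, h2.symm⟩
  have hdisj : Disjoint A B := by
    rw [Finset.disjoint_left]
    intro k hk hk'
    simp only [hA, hB, Finset.mem_filter] at hk hk'
    omega
  have hcards : A.card = B.card := by
    apply Finset.card_bij (fun k _ => r - k)
    · intro k hk
      simp only [hA, Finset.mem_filter, Finset.mem_range] at hk
      simp only [hB, Finset.mem_filter, Finset.mem_range]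
      have hk0 : k ≠ 0 := by
        rintro rfl
        have := Nat.coprime_zero_left r |>.mp hk.2.1
        omega
      exact ⟨by omega, aux_cop (by omega) hk.2.1, by omega⟩
    · intro a ha b hb hab
      simp only [hA, Finset.mem_filter, Finset.mem_range] at ha hb
      omega
    · intro b hb
      simp only [hB, Finset.mem_filter, Finset.mem_range] at hb
      have hmem : r - b ∈ A := by
        simp only [hA, Finset.mem_filter, Finset.mem_range]
        exact ⟨by omega, aux_cop (by omega) hb.2.1, by omega⟩
      exact ⟨r - b, hmem, by omega⟩
  have htot : r.totient = A.card + B.card := by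
    rw [Nat.totient_eq_card_coprime, ← Finset.card_union_of_disjoint hdisj, ← hunion]

  omega

theorem stmt17 (q : ℕ → Polynomial ℂ) (hq1 : q 1 = X - 2) (hq2 : q 2 = X + 2)
    (hq : ∀ d : ℕ, 3 ≤ d → ∀ x : ℂ, x ≠ 0 →
      (Polynomial.cyclotomic d ℂ).eval x = x ^ (Nat.totient d / 2) * (q d).eval (x + x⁻¹))
    (r : ℕ) (hr : 3 ≤ r) :
    (∀ z : ℂ, (q r).IsRoot z ↔
        ∃ k : ℕ, Nat.Coprime k r ∧ 1 ≤ k ∧ 2 * k < r ∧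
          z = (2 * Real.cos (2 * π * k / r) : ℝ)) ∧
      (q r).roots.toFinset.card = r.totient / 2 := by
  classical
  have hr0 : r ≠ 0 := by omega
  have hrpos : 0 < r := by omega
  have hrR : (0 : ℝ) < (r : ℝ) := by exact_mod_cast hrpos
  -- the basic identity relating exp and 2cos
  have hexp : ∀ k : ℕ, Complex.exp (2 * π * Complex.I * (k / r)) +
      (Complex.exp (2 * π * Complex.I * (k / r)))⁻¹
        = ((2 * Real.cos (2 * π * k / r) : ℝ) : ℂ) := by
    intro k
    have harg : 2 * π * Complex.I * ((k : ℂ) / (r : ℂ))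
        = ((2 * π * k / r : ℝ) : ℂ) * Complex.I := by
      push_cast; ring
    rw [harg]
    exact aux_exp_add_inv _
  -- backward direction
  have hback : ∀ k : ℕ, Nat.Coprime k r →
      (q r).IsRoot ((2 * Real.cos (2 * π * k / r) : ℝ) : ℂ) := by
    intro k hk
    set w := Complex.exp (2 * π * Complex.I * (k / r)) with hw
    have hprim : IsPrimitiveRoot w r := Complex.isPrimitiveRoot_exp_of_coprime k r hr0 hk
    have hw0 : w ≠ 0 := Complex.exp_ne_zero _
    have hroot : (cyclotomic r ℂ).IsRoot w := (isRoot_cyclotomic_iff_charZero hrpos).mpr hprim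
    have heq := hq r hr w hw0
    rw [IsRoot, heq, hexp k] at hroot
    rcases mul_eq_zero.mp hroot with h | h
    · exact absurd h (pow_ne_zero _ hw0)
    · exact h
  -- forward direction
  have hfor : ∀ z : ℂ, (q r).IsRoot z → ∃ k : ℕ, Nat.Coprime k r ∧ 1 ≤ k ∧ 2 * k < r ∧
      z = ((2 * Real.cos (2 * π * k / r) : ℝ) : ℂ) := by
    intro z hz
    have hdeg : 0 < degree ((X : ℂ[X]) ^ 2 - C z * X + 1) := by
      have : degree ((X : ℂ[X]) ^ 2 - C z * X + 1) = 2 := by compute_degree!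
      rw [this]; norm_num
    obtain ⟨w, hwroot⟩ := Complex.exists_root hdeg
    have hwval : w ^ 2 - z * w + 1 = 0 := by
      simpa [IsRoot] using hwroot
    have hw0 : w ≠ 0 := by
      rintro rfl
      simp at hwval
    have hwz : w + w⁻¹ = z := by
      field_simp
      linear_combination hwval
    have heq := hq r hr w hw0
    rw [hwz, hz, mul_zero] at heq
    have hprim : IsPrimitiveRoot w r := (isRoot_cyclotomic_iff_charZero hrpos).mp heq
    rw [Complex.isPrimitiveRoot_iff _ _ hr0] at hprim
    obtain ⟨i, hi, hicop, hie⟩ := hprim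
    have hi0 : i ≠ 0 := by
      rintro rfl
      have := Nat.coprime_zero_left r |>.mp hicop
      omega
    have hine : 2 * i ≠ r := aux_two_ne hr hicop
    have hz' : z = ((2 * Real.cos (2 * π * i / r) : ℝ) : ℂ) := by
      rw [← hwz, ← hie, hexp i]
    rcases lt_or_gt_of_ne hine with hlt | hgt
    · exact ⟨i, hicop, by omega, hlt, hz'⟩
    · refine ⟨r - i, aux_cop (by omega) hicop, by omega, by omega, ?_⟩
      rw [hz']
      norm_cast
      congr 1
      have : 2 * π * (↑(r - i) : ℝ) / r = 2 * π - 2 * π * i / r := by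
        have hcast : ((r - i : ℕ) : ℝ) = (r : ℝ) - (i : ℝ) := by
          push_cast [Nat.le_of_lt hi]; ring
        rw [hcast]
        field_simp
      rw [this, Real.cos_two_pi_sub]
  have key : ∀ z : ℂ, (q r).IsRoot z ↔
      ∃ k : ℕ, Nat.Coprime k r ∧ 1 ≤ k ∧ 2 * k < r ∧
        z = ((2 * Real.cos (2 * π * k / r) : ℝ) : ℂ) := by
    intro z
    constructor
    · exact hfor z
    · rintro ⟨k, hk, -, -, rfl⟩
      exact hback k hk
  refine ⟨key, ?_⟩
  -- q r ≠ 0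
  have hq0 : q r ≠ 0 := by
    intro h0
    have heq := hq r hr 2 two_ne_zero
    rw [h0, eval_zero, mul_zero] at heq
    have hprim : IsPrimitiveRoot (2 : ℂ) r := (isRoot_cyclotomic_iff_charZero hrpos).mp heq
    have h2 : (2 : ℂ) ^ r = 1 := hprim.pow_eq_one
    have h2' : (2 : ℝ) ^ r = 1 := by exact_mod_cast h2
    have : (1 : ℝ) < 2 ^ r := one_lt_pow₀ (by norm_num) hr0
    linarith
  -- the roots as an image
  set A := (Finset.range r).filter (fun k => Nat.Coprime k r ∧ 2 * k < r) with hAdef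
  have himg : (q r).roots.toFinset
      = A.image (fun k : ℕ => ((2 * Real.cos (2 * π * (k : ℝ) / r) : ℝ) : ℂ)) := by
    ext z
    rw [Multiset.mem_toFinset, mem_roots hq0, key z]
    simp only [hAdef, Finset.mem_image, Finset.mem_filter, Finset.mem_range]
    constructor
    · rintro ⟨k, h1, h2, h3, h4⟩
      exact ⟨k, ⟨by omega, h1, h3⟩, h4.symm⟩
    · rintro ⟨k, ⟨h1, h2, h3⟩, h4⟩
      have hk0 : k ≠ 0 := by
        rintro rfl
        have := Nat.coprime_zero_left r |>.mp h2
        omega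
      exact ⟨k, h2, by omega, h3, h4.symm⟩
  rw [himg, Finset.card_image_of_injOn, aux_count r hr]
  -- injectivity on A
  intro a ha b hb hab
  simp only [hAdef, Finset.mem_coe, Finset.mem_filter, Finset.mem_range] at ha hb
  have hab' : Real.cos (2 * π * a / r) = Real.cos (2 * π * b / r) := by
    have := Complex.ofReal_inj.mp hab
    linarith
  have hbound : ∀ k : ℕ, 2 * k < r → 2 * π * (k : ℝ) / r ∈ Set.Icc 0 π := by
    intro k hk
    constructor
    · positivity
    · rw [div_le_iff₀ hrR]
      have : (2 * k : ℝ) ≤ r := by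
        have : (2 * k : ℕ) ≤ r := by omega
        exact_mod_cast this
      nlinarith [Real.pi_pos]
  have h := Real.injOn_cos (hbound a ha.2.2) (hbound b hb.2.2) hab'
  field_simp at h
  exact_mod_cast h
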